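/- In the BZ-vesicle cellular automaton, the number of excited cells never increases: for any configuration on a finite hexagonal lattice with absorbing boundary, the number of cells in wave-fragment states at time t+1 is at most the number at time t. -/

import Mathlib

/-- Cell states of the BZ-vesicle cellular automaton: resting, refractory,
or an excited wave-fragment state directed in one of six directions
(indexed by `ZMod 6`: 0 = SE, 1 = SW, 2 = W, 3 = NW, 4 = NE, 5 = E). -/
inductive CellState
  | resting
  | refractory
  | wave (d : ZMod 6)
deriving DecidableEq

/-- Incidence vector with a single incoming wave from direction index `d`. -/
def single (d : ZMod 6) : ZMod 6 → Bool := fun i => decide (i = d)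

/-- Incidence vector with incoming waves at positions `d-1` and `d+1`. -/
def pair (d : ZMod 6) : ZMod 6 → Bool := fun i => decide (i = d - 1) || decide (i = d + 1)

/-- Incidence vector with incoming waves at positions `d-1`, `d`, `d+1`. -/
def triple (d : ZMod 6) : ZMod 6 → Bool :=
  fun i => decide (i = d - 1) || decide (i = d) || decide (i = d + 1)

/-- The incidence vector `s` triggers an outgoing wave in direction `d`. -/
def trigger (d : ZMod 6) (s : ZMod 6 → Bool) : Prop :=
  s = single d ∨ s = pair d ∨ s = triple d

instance (d : ZMod 6) (s : ZMod 6 → Bool) : Decidable (trigger d s) := by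
  unfold trigger; infer_instance

/-- Local transition rule of the BZ-vesicle cellular automaton. -/
def stepCell (q : CellState) (s : ZMod 6 → Bool) : CellState :=
  match q with
  | .resting =>
      if trigger 0 s then .wave 0
      else if trigger 1 s then .wave 1
      else if trigger 2 s then .wave 2
      else if trigger 3 s then .wave 3
      else if trigger 4 s then .wave 4
      else if trigger 5 s then .wave 5
      else .resting
  | .wave _ => .refractory
  | .refractory => .resting

/-- Displacement (in axial hexagonal coordinates on `ℤ × ℤ`) travelled by a
wave-fragment moving in direction `d`; opposite directions have opposite
offsets: `off (d + 3) = - off d`. -/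
def off : ZMod 6 → ℤ × ℤ := fun d =>
  if d = 0 then (1, 0)
  else if d = 1 then (0, 1)
  else if d = 2 then (-1, 1)
  else if d = 3 then (-1, 0)
  else if d = 4 then (0, -1)
  else (1, -1)

/-- Incidence vector of cell `x` in configuration `c`: neighbour `x - off i`
is read as active iff it carries the wave-fragment state directed toward `x`. -/
def incid (c : ℤ × ℤ → CellState) (x : ℤ × ℤ) : ZMod 6 → Bool :=
  fun i => decide (c (x - off i) = CellState.wave i)

/-- Synchronous update of a configuration on the finite lattice `L` with
absorbing boundary: cells outside `L` are permanently resting. -/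
def stepConf (L : Finset (ℤ × ℤ)) (c : ℤ × ℤ → CellState) : ℤ × ℤ → CellState :=
  fun x => if x ∈ L then stepCell (c x) (incid c x) else CellState.resting

/-- Whether a cell state is an excited (wave-fragment) state. -/
def isWave : CellState → Bool
  | .wave _ => true
  | _ => false

/-- Number of cells of `L` in excited (wave-fragment) states. -/
def excitedCount (L : Finset (ℤ × ℤ)) (c : ℤ × ℤ → CellState) : ℕ :=
  (L.filter (fun x => isWave (c x) = true)).card

/-- The number of excited cells never increases: for any configuration on a
finite hexagonal lattice with absorbing boundary, the number of cells in
wave-fragment states at time `t + 1` is at most the number at time `t`.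
Proof via an injection to time-`t` excited cells. -/
def exInd (s : ZMod 6 → Bool) : ZMod 6 :=
  if s 0 then 0 else if s 1 then 1 else if s 2 then 2
  else if s 3 then 3 else if s 4 then 4 else 5

lemma exInd_spec (s : ZMod 6 → Bool) (h : ∃ i, s i = true) : s (exInd s) = true := by
  unfold exInd
  split_ifs with h0 h1 h2 h3 h4
  · exact h0
  · exact h1
  · exact h2
  · exact h3
  · exact h4
  · obtain ⟨i, hi⟩ := h
    have hall : ∀ j : ZMod 6, j = 0 ∨ j = 1 ∨ j = 2 ∨ j = 3 ∨ j = 4 ∨ j = 5 := by decide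
    have hi' := hall i
    rcases hi' with h|h|h|h|h|h <;> subst h <;> simp_all

lemma trigger_exists (d : ZMod 6) (s : ZMod 6 → Bool) (h : trigger d s) :
    ∃ i, s i = true := by
  rcases h with h | h | h
  · exact ⟨d, by subst h; simp [single]⟩
  · exact ⟨d + 1, by subst h; simp [pair]⟩
  · exact ⟨d, by subst h; simp [triple]⟩

lemma stepCell_wave (q : CellState) (s : ZMod 6 → Bool) (d : ZMod 6)
    (h : stepCell q s = CellState.wave d) : ∃ i, s i = true := by
  cases q with
  | resting =>
      unfold stepCell at h
      split_ifs at h with h0 h1 h2 h3 h4 h5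
      all_goals first
        | exact trigger_exists 0 s h0
        | exact trigger_exists 1 s h1
        | exact trigger_exists 2 s h2
        | exact trigger_exists 3 s h3
        | exact trigger_exists 4 s h4
        | exact trigger_exists 5 s h5
        | exact absurd h (by simp)
  | wave d' => exact absurd h (by simp [stepCell])
  | refractory => exact absurd h (by simp [stepCell])

/-- The number of excited cells never increases: for any configuration on a
finite hexagonal lattice with absorbing boundary, the number of cells in
wave-fragment states at time `t + 1` is at most the number at time `t`. -/
theorem excited_count_nonincreasing (L : Finset (ℤ × ℤ))
    (c : ℤ × ℤ → CellState) (hc : ∀ x ∉ L, c x = CellState.resting) :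
    excitedCount L (stepConf L c) ≤ excitedCount L c := by
  classical
  apply Finset.card_le_card_of_injOn (fun x => x - off (exInd (incid c x)))
  · intro x hx
    simp only [Finset.mem_coe, Finset.mem_filter] at hx ⊢
    obtain ⟨hxL, hw⟩ := hx
    have hstep : stepConf L c x = stepCell (c x) (incid c x) := by
      simp [stepConf, hxL]
    rw [hstep] at hw
    obtain ⟨d, hd⟩ : ∃ d, stepCell (c x) (incid c x) = CellState.wave d := by
      rcases h : stepCell (c x) (incid c x) with _ | _ | d
      · rw [h] at hw; simp [isWave] at hw
      · rw [h] at hw; simp [isWave] at hw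
      · exact ⟨d, rfl⟩
    have hex := exInd_spec _ (stepCell_wave _ _ _ hd)
    set i := exInd (incid c x) with hi
    have hcw : c (x - off i) = CellState.wave i := by
      simpa [incid] using hex
    constructor
    · by_contra hmem
      rw [hc _ hmem] at hcw
      exact CellState.noConfusion hcw
    · rw [hcw]; rfl
  · intro x hx y hy hxy
    simp only [Finset.mem_coe, Finset.mem_filter] at hx hy
    have key : ∀ z ∈ L, isWave (stepConf L c z) = true →
        c (z - off (exInd (incid c z))) = CellState.wave (exInd (incid c z)) := by
      intro z hzL hw
      have hstep : stepConf L c z = stepCell (c z) (incid c z) := by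
        simp [stepConf, hzL]
      rw [hstep] at hw
      obtain ⟨d, hd⟩ : ∃ d, stepCell (c z) (incid c z) = CellState.wave d := by
        rcases h : stepCell (c z) (incid c z) with _ | _ | d
        · rw [h] at hw; simp [isWave] at hw
        · rw [h] at hw; simp [isWave] at hw
        · exact ⟨d, rfl⟩
      have hex := exInd_spec _ (stepCell_wave _ _ _ hd)
      simpa [incid] using hex
    have hx' := key x hx.1 hx.2
    have hy' := key y hy.1 hy.2
    have hxy' : x - off (exInd (incid c x)) = y - off (exInd (incid c y)) := hxy
    rw [hxy'] at hx'
    rw [hx'] at hy'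
    have heq : exInd (incid c x) = exInd (incid c y) := by
      injection hy'
    rw [heq] at hxy'
    exact sub_left_injective hxy'
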